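/- Let q1 < q2 be primes and let p be an integer with p ≥ q1²q2². Then there exist positive integers u, v such that p = u·q1 + v·q2, q1 ∤ u, and q2 ∤ v. -/
import Mathlib


theorem frobenius_refinement (q1 q2 p : ℕ) (hq1 : q1.Prime) (hq2 : q2.Prime)
    (hlt : q1 < q2) (hp : q1 ^ 2 * q2 ^ 2 ≤ p) :
    ∃ u v : ℕ, 0 < u ∧ 0 < v ∧ p = u * q1 + v * q2 ∧ ¬ q1 ∣ u ∧ ¬ q2 ∣ v := by
  set n := q1 ^ 2 with hn
  have hq1pos := hq1.pos
  have hq2pos := hq2.pos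
  have hq11 := hq1.one_lt
  have hq21 := hq2.one_lt
  have hnpos : 0 < n := by positivity
  haveI : NeZero n := ⟨hnpos.ne'⟩
  have hco : Nat.Coprime n q2 :=
    Nat.Coprime.pow_left 2 ((Nat.coprime_primes hq1 hq2).mpr hlt.ne)
  set b : ℕ := ((((p - q1 : ℕ) : ZMod n)) * ((q2 : ZMod n))⁻¹).val with hb
  have hbmod : q2 * b ≡ (p - q1) [MOD n] := by
    have h1 : ((q2 : ZMod n)) * ((q2 : ZMod n))⁻¹ = 1 :=
      ZMod.coe_mul_inv_eq_one q2 hco.symm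
    have h2 : ((q2 * b : ℕ) : ZMod n) = ((p - q1 : ℕ) : ZMod n) := by
      push_cast [hb]
      rw [ZMod.natCast_val, ZMod.cast_id]
      rw [mul_comm ((((p - q1 : ℕ) : ZMod n))), ← mul_assoc, h1, one_mul]
    exact (ZMod.natCast_eq_natCast_iff _ _ _).mp h2
  obtain ⟨v0, hv0n, hv0q2⟩ := Nat.chineseRemainder hco b 1
  set v := v0 % (n * q2) with hv
  have hmulpos : 0 < n * q2 := by positivity
  have hvlt : v < n * q2 := Nat.mod_lt _ hmulpos
  have hvmodn : v ≡ b [MOD n] := by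
    have : v % n = v0 % n := Nat.mod_mod_of_dvd v0 ⟨q2, rfl⟩
    exact Nat.ModEq.trans this hv0n
  have hvmodq2 : v ≡ 1 [MOD q2] := by
    have : v % q2 = v0 % q2 := Nat.mod_mod_of_dvd v0 ⟨n, mul_comm n q2⟩
    exact Nat.ModEq.trans this hv0q2
  have hvndvd : ¬ q2 ∣ v := by
    intro h
    have h0 : v ≡ 0 [MOD q2] := (Nat.modEq_zero_iff_dvd).mpr h
    have : (1 : ℕ) ≡ 0 [MOD q2] := hvmodq2.symm.trans h0
    have : q2 ∣ 1 := (Nat.modEq_zero_iff_dvd).mp this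
    exact absurd (Nat.le_of_dvd one_pos this) (by omega)
  have hvpos : 0 < v := by
    rcases Nat.eq_zero_or_pos v with h | h
    · exact absurd (h ▸ dvd_zero q2) hvndvd
    · exact h
  have hq1le : q1 ≤ p := by nlinarith
  have hvq2mul : v * q2 ≡ p - q1 [MOD n] := by
    calc v * q2 ≡ b * q2 [MOD n] := hvmodn.mul_right q2
    _ = q2 * b := mul_comm _ _
    _ ≡ p - q1 [MOD n] := hbmod
  have hkey : v * q2 + q1 ≡ p [MOD n] := by
    have := hvq2mul.add_right q1
    rwa [Nat.sub_add_cancel hq1le] at this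
  have hvle : v * q2 + q2 ≤ p := by
    have h1 : (v + 1) * q2 ≤ n * q2 * q2 := Nat.mul_le_mul_right q2 hvlt
    have h2 : n * q2 * q2 = q1 ^ 2 * q2 ^ 2 := by ring
    nlinarith
  have hvq2lep : v * q2 ≤ p := by omega
  set w := p - v * q2 with hwdef
  have hw : w + v * q2 = p := Nat.sub_add_cancel hvq2lep
  have hwq2 : q2 ≤ w := by omega
  have hwq1 : w ≡ q1 [MOD n] := by
    have h1 : v * q2 + q1 ≡ v * q2 + w [MOD n] := by
      rw [show v * q2 + w = p by omega]; exact hkey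
    exact (Nat.ModEq.add_left_cancel' (v * q2) h1).symm
  have hdvd : q1 ∣ w := by
    have h1 : q1 ∣ n := dvd_pow_self q1 two_ne_zero
    have h2 : w ≡ q1 [MOD q1] := hwq1.of_dvd h1
    have h3 : q1 ≡ 0 [MOD q1] := (Nat.modEq_zero_iff_dvd).mpr dvd_rfl
    exact (Nat.modEq_zero_iff_dvd).mp (h2.trans h3)
  refine ⟨w / q1, v, ?_, hvpos, ?_, ?_, hvndvd⟩
  · exact Nat.div_pos (le_trans hlt.le hwq2) hq1pos
  · rw [Nat.div_mul_cancel hdvd]; omega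
  · intro hdu
    have h1 : n ∣ w := by
      obtain ⟨c, hc⟩ := hdu
      have : w = q1 * q1 * c := by
        rw [← Nat.div_mul_cancel hdvd, hc]; ring
      exact ⟨c, by rw [this, hn]; ring⟩
    have h2 : w ≡ 0 [MOD n] := (Nat.modEq_zero_iff_dvd).mpr h1
    have h3 : q1 ≡ 0 [MOD n] := hwq1.symm.trans h2
    have h4 : n ∣ q1 := (Nat.modEq_zero_iff_dvd).mp h3
    have h5 := Nat.le_of_dvd hq1pos h4
    rw [hn] at h5
    nlinarith
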